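/- Let A = a_d x^d + ... + a_1 x + a_0 ∈ ℤ[x] with a_0 ≥ 2 and a_d ≠ 0, and r = (a_d/a_0, a_{d-1}/a_0, ..., a_1/a_0). On the Brunotte module Λ_A spanned by W_0 = a_d, W_k = X W_{k-1} + a_{d-k} (1 ≤ k ≤ d-1) in ℤ[x]/Aℤ[x], the backward division map D_A satisfies D_A(Σ_{k=0}^{d-1} z_k W_k) = Σ_{k=0}^{d-2} z_{k+1} W_k - ⌊(z_0 a_d + ... + z_{d-1} a_1)/a_0⌋ W_{d-1}; hence D_A restricted to Λ_A is conjugate to τ_r via the coordinate map Ψ_A. -/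
import Mathlib


open Matrix Filter

noncomputable section

/-- Scalar product r·z of a real vector with an integer vector. -/
def srsDot {d : ℕ} (r : Fin d → ℝ) (z : Fin d → ℤ) : ℝ := ∑ i, r i * (z i : ℝ)

/-- The shift radix map τ_r(z) = (z_1,...,z_{d-1}, -⌊r·z⌋). -/
def srsTau {d : ℕ} (r : Fin d → ℝ) (z : Fin d → ℤ) : Fin d → ℤ :=
  fun i => if h : (i : ℕ) + 1 < d then z ⟨(i : ℕ) + 1, h⟩ else -⌊srsDot r z⌋

/-- The companion matrix M_r of r. -/
def companion {d : ℕ} (r : Fin d → ℝ) : Matrix (Fin d) (Fin d) ℝ :=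
  fun i j => if (i : ℕ) + 1 < d then (if (j : ℕ) = (i : ℕ) + 1 then 1 else 0) else -r j

/-- The vector (0,...,0,v)^t. -/
def digitVec {d : ℕ} (v : ℝ) : Fin d → ℝ := fun i => if (i : ℕ) + 1 = d then v else 0

/-- Coordinatewise cast of an integer vector to a real vector. -/
def intToReal {d : ℕ} (z : Fin d → ℤ) : Fin d → ℝ := fun i => (z i : ℝ)

/-- M_r is contractive (spectral radius < 1). -/
def srsContractive {d : ℕ} (r : Fin d → ℝ) : Prop :=
  ∃ C > (0:ℝ), ∃ ρ : ℝ, 0 ≤ ρ ∧ ρ < 1 ∧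
    ∀ (n : ℕ) (x : Fin d → ℝ), ‖((companion r) ^ n).mulVec x‖ ≤ C * ρ ^ n * ‖x‖

/-- The SRS tile T_r(x), as the set of limit points lim M_r^n z_{-n} with
τ_r^n(z_{-n}) = x. -/
def srsTile {d : ℕ} (r : Fin d → ℝ) (x : Fin d → ℤ) : Set (Fin d → ℝ) :=
  {t | ∃ z : ℕ → (Fin d → ℤ), (∀ n, (srsTau r)^[n] (z n) = x) ∧
    Tendsto (fun n => ((companion r) ^ n).mulVec (intToReal (z n))) atTop (nhds t)}

/-- Brunotte basis polynomials: W_0 = a_d, W_{k+1} = X·W_k + a_{d-k-1}. -/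
def brunotteW (A : Polynomial ℤ) : ℕ → Polynomial ℤ
  | 0 => Polynomial.C (A.coeff A.natDegree)
  | k + 1 => Polynomial.X * brunotteW A k + Polynomial.C (A.coeff (A.natDegree - (k + 1)))

/-- Backward division map on representatives:
D_A(P) = Σ p_{i+1}X^i - ⌊p_0/a_0⌋ Σ a_{i+1}X^i. -/
def backDiv (A P : Polynomial ℤ) : Polynomial ℤ :=
  P.divX - Polynomial.C (Int.fdiv (P.coeff 0) (A.coeff 0)) * A.divX


section AuxBrunotte

lemma divX_iter_coeff (p : Polynomial ℤ) (m n : ℕ) :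
    (Polynomial.divX^[m] p).coeff n = p.coeff (n + m) := by
  induction m generalizing n with
  | zero => simp
  | succ m ih =>
    rw [Function.iterate_succ_apply', Polynomial.coeff_divX, ih]
    congr 1; omega

lemma brunotteW_coeff_zero (A : Polynomial ℤ) (k : ℕ) :
    (brunotteW A k).coeff 0 = A.coeff (A.natDegree - k) := by
  cases k with
  | zero => simp [brunotteW]
  | succ k => simp [brunotteW, Polynomial.mul_coeff_zero]

lemma brunotteW_eq_divX_iter (A : Polynomial ℤ) (k : ℕ) (hk : k ≤ A.natDegree) :
    brunotteW A k = Polynomial.divX^[A.natDegree - k] A := by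
  induction k with
  | zero =>
    ext n
    rw [divX_iter_coeff]
    simp only [brunotteW, Polynomial.coeff_C, Nat.sub_zero]
    split
    · next h => subst h; rw [zero_add]
    · next h => exact (Polynomial.coeff_eq_zero_of_natDegree_lt (by omega)).symm
  | succ k ih =>
    have h1 : A.natDegree - k = (A.natDegree - (k+1)) + 1 := by omega
    have hc : A.coeff (A.natDegree - (k+1)) =
        (Polynomial.divX^[A.natDegree - (k+1)] A).coeff 0 := by
      rw [divX_iter_coeff, zero_add]
    show Polynomial.X * brunotteW A k + Polynomial.C (A.coeff (A.natDegree - (k+1))) = _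
    rw [ih (by omega), h1, Function.iterate_succ_apply', hc]
    exact Polynomial.X_mul_divX_add _

lemma brunotteW_last (A : Polynomial ℤ) (hd : 0 < A.natDegree) :
    brunotteW A (A.natDegree - 1) = A.divX := by
  rw [brunotteW_eq_divX_iter A _ (by omega), show A.natDegree - (A.natDegree - 1) = 1 by omega,
    Function.iterate_one]

lemma divX_X_mul (p : Polynomial ℤ) : (Polynomial.X * p).divX = p := by
  ext n; simp [Polynomial.coeff_divX, Polynomial.coeff_X_mul]

lemma brunotteW_succ_divX (A : Polynomial ℤ) (k : ℕ) :
    (brunotteW A (k+1)).divX = brunotteW A k := by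
  show (Polynomial.X * brunotteW A k + Polynomial.C _).divX = _
  rw [Polynomial.divX_add, Polynomial.divX_C, add_zero, divX_X_mul]

lemma divX_zsmul (c : ℤ) (p : Polynomial ℤ) : (c • p).divX = c • p.divX := by
  ext n; simp [Polynomial.coeff_divX]

lemma divX_sum {ι : Type*} (s : Finset ι) (f : ι → Polynomial ℤ) :
    (∑ i ∈ s, f i).divX = ∑ i ∈ s, (f i).divX := by
  ext n; simp [Polynomial.coeff_divX, Polynomial.finset_sum_coeff]

lemma floor_cast_div_fdiv (a b : ℤ) (hb : 0 < b) : ⌊(a:ℝ)/(b:ℝ)⌋ = Int.fdiv a b := by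
  rw [Int.fdiv_eq_ediv_of_nonneg _ hb.le]
  obtain ⟨n, rfl⟩ : ∃ n : ℕ, (n:ℤ) = b := ⟨b.toNat, Int.toNat_of_nonneg hb.le⟩
  have h3 : (a:ℝ)/((n:ℤ):ℝ) = ((((a:ℚ)/(n:ℚ)) : ℚ) : ℝ) := by push_cast; ring
  rw [h3, Rat.floor_cast, Rat.floor_intCast_div_natCast]

end AuxBrunotte

/-- on the Brunotte module, the backward division map satisfies
D_A(Σ z_k W_k) = Σ_{k≤d-2} z_{k+1} W_k - ⌊(z_0 a_d + ⋯ + z_{d-1} a_1)/a_0⌋ W_{d-1}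
= Σ_k (τ_r z)_k W_k in ℤ[x]/Aℤ[x]; hence D_A restricted to Λ_A is conjugate to τ_r
via the coordinate map Ψ_A, where r = (a_d/a_0, …, a_1/a_0). -/
theorem backDiv_brunotte_conjugate_srsTau (A : Polynomial ℤ)
    (hd : 0 < A.natDegree) (ha0 : 2 ≤ A.coeff 0)
    (had : A.coeff A.natDegree ≠ 0)
    (r : Fin A.natDegree → ℝ)
    (hr : ∀ i : Fin A.natDegree,
      r i = (A.coeff (A.natDegree - (i : ℕ)) : ℝ) / (A.coeff 0 : ℝ))
    (z : Fin A.natDegree → ℤ) :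
    Ideal.Quotient.mk (Ideal.span {A})
        (backDiv A (∑ k : Fin A.natDegree, z k • brunotteW A (k : ℕ))) =
      Ideal.Quotient.mk (Ideal.span {A})
        (∑ k : Fin A.natDegree, (srsTau r z) k • brunotteW A (k : ℕ)) := by
  have ha0' : 0 < A.coeff 0 := by omega
  obtain ⟨m, hm⟩ : ∃ m, A.natDegree = m + 1 := ⟨A.natDegree - 1, by omega⟩
  congr 1
  classical
  set Z : ℕ → ℤ := fun k => if h : k < A.natDegree then z ⟨k, h⟩ else 0 with hZ
  set ZT : ℕ → ℤ := fun k => if h : k < A.natDegree then srsTau r z ⟨k, h⟩ else 0 with hZT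
  have h1 : ∑ k : Fin A.natDegree, z k • brunotteW A (k:ℕ)
      = ∑ k ∈ Finset.range A.natDegree, Z k • brunotteW A k := by
    rw [← Fin.sum_univ_eq_sum_range (fun k => Z k • brunotteW A k)]
    exact Finset.sum_congr rfl fun k _ => by simp [hZ, k.isLt]
  have h2 : ∑ k : Fin A.natDegree, (srsTau r z) k • brunotteW A (k:ℕ)
      = ∑ k ∈ Finset.range A.natDegree, ZT k • brunotteW A k := by
    rw [← Fin.sum_univ_eq_sum_range (fun k => ZT k • brunotteW A k)]
    exact Finset.sum_congr rfl fun k _ => by simp [hZT, k.isLt]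
  rw [h1, h2, hm]
  have hdivP : (∑ k ∈ Finset.range (m+1), Z k • brunotteW A k).divX
      = ∑ k ∈ Finset.range m, Z (k+1) • brunotteW A k := by
    rw [divX_sum, Finset.sum_range_succ' (fun k => (Z k • brunotteW A k).divX) m]
    have h0 : (Z 0 • brunotteW A 0).divX = 0 := by
      rw [divX_zsmul, show brunotteW A 0 = Polynomial.C (A.coeff A.natDegree) from rfl,
        Polynomial.divX_C, smul_zero]
    rw [h0, add_zero]
    exact Finset.sum_congr rfl fun k _ => by rw [divX_zsmul, brunotteW_succ_divX]
  have hc0 : (∑ k ∈ Finset.range (m+1), Z k • brunotteW A k).coeff 0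
      = ∑ k ∈ Finset.range (m+1), Z k * A.coeff (A.natDegree - k) := by
    rw [Polynomial.finset_sum_coeff]
    exact Finset.sum_congr rfl fun k _ => by
      rw [Polynomial.coeff_smul, brunotteW_coeff_zero, smul_eq_mul]
  have hdot : srsDot r z
      = ((∑ k ∈ Finset.range (m+1), Z k * A.coeff (A.natDegree - k) : ℤ) : ℝ)
          / (A.coeff 0 : ℝ) := by
    rw [srsDot, ← hm]
    push_cast [Finset.sum_div]
    rw [← Fin.sum_univ_eq_sum_range
      (fun k => (Z k : ℝ) * (A.coeff (A.natDegree - k) : ℝ) / (A.coeff 0 : ℝ))]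
    exact Finset.sum_congr rfl fun i _ => by
      rw [hr i]; simp only [hZ, dif_pos i.isLt, Fin.eta]; ring
  have hfl : Int.fdiv (∑ k ∈ Finset.range (m+1), Z k * A.coeff (A.natDegree - k))
      (A.coeff 0) = ⌊srsDot r z⌋ := by
    rw [hdot, floor_cast_div_fdiv _ _ ha0']
  have hAdivX : A.divX = brunotteW A m := by
    rw [← brunotteW_last A hd]; congr 1; omega
  have hZTm : ZT m = -⌊srsDot r z⌋ := by
    have h1 : m < A.natDegree := by omega
    simp only [hZT, dif_pos h1, srsTau]
    rw [dif_neg (by omega)]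
  have hsum2 : ∑ k ∈ Finset.range m, ZT k • brunotteW A k
      = ∑ k ∈ Finset.range m, Z (k+1) • brunotteW A k := by
    refine Finset.sum_congr rfl fun k hk => ?_
    have hk' := Finset.mem_range.mp hk
    have hk1 : k < A.natDegree := by omega
    have hk2 : k + 1 < A.natDegree := by omega
    simp only [hZT, hZ, dif_pos hk1, dif_pos hk2, srsTau]
  rw [show backDiv A (∑ k ∈ Finset.range (m+1), Z k • brunotteW A k)
      = (∑ k ∈ Finset.range (m+1), Z k • brunotteW A k).divX
        - Polynomial.C (Int.fdiv ((∑ k ∈ Finset.range (m+1), Z k • brunotteW A k).coeff 0)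
            (A.coeff 0)) * A.divX from rfl,
    hdivP, hc0, hfl, hAdivX, Finset.sum_range_succ, hsum2, hZTm, sub_eq_add_neg]
  congr 1
  rw [neg_smul, Polynomial.smul_eq_C_mul]
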